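/- Let μ > 0, a > 0, C₀ > 0, and let V₀, W₀ : (0, a) → (0, ∞) be twice continuously differentiable with v·|V₀′(v)| ≤ C₀·V₀(v), v·|W₀′(v)| ≤ C₀·W₀(v) and v²·|W₀″(v)| ≤ C₀·W₀(v) for all v ∈ (0, a). Set ν(t) = V₀(μt), ω(t) = W₀(μt), and σ = u/(t·ν(t)). Then there is a constant C′ > 0, depending only on C₀ and μ, such that for all t > 0 and all u with 0 < u ≤ μt and u + μt < a, one has |W₀(u + μt) − ω(t)·(1 + μ⁻¹·(t·ω′(t)/ω(t))·ν(t)·σ)| ≤ C′·ω(t)·(ν(t)·σ)². -/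

import Mathlib

/-- First-order expansion of the productish approximate solution for the
second warping factor near the tip:
`W₀(u + μt) = ω(t)·(1 + μ⁻¹·⟨ω⟩₁·ν·σ + O((νσ)²))` for `0 < u ≤ μt`, where
`ν(t) = V₀(μt)`, `ω(t) = W₀(μt)`, `σ = u/(t·ν(t))`, `⟨ω⟩₁ = t·ω′(t)/ω(t)`. -/
theorem W_tip_expansion (μ C₀ : ℝ) (hμ : 0 < μ) (hC₀ : 0 < C₀) :
    ∃ C' : ℝ, 0 < C' ∧
      ∀ a : ℝ, 0 < a → ∀ V₀ V₀' V₀'' W₀ W₀' W₀'' : ℝ → ℝ,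
        (∀ v ∈ Set.Ioo (0 : ℝ) a, 0 < V₀ v) →
        (∀ v ∈ Set.Ioo (0 : ℝ) a, 0 < W₀ v) →
        (∀ v ∈ Set.Ioo (0 : ℝ) a, HasDerivAt V₀ (V₀' v) v) →
        (∀ v ∈ Set.Ioo (0 : ℝ) a, HasDerivAt V₀' (V₀'' v) v) →
        (∀ v ∈ Set.Ioo (0 : ℝ) a, HasDerivAt W₀ (W₀' v) v) →
        (∀ v ∈ Set.Ioo (0 : ℝ) a, HasDerivAt W₀' (W₀'' v) v) →
        ContinuousOn V₀'' (Set.Ioo 0 a) →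
        ContinuousOn W₀'' (Set.Ioo 0 a) →
        (∀ v ∈ Set.Ioo (0 : ℝ) a, v * |V₀' v| ≤ C₀ * V₀ v) →
        (∀ v ∈ Set.Ioo (0 : ℝ) a, v * |W₀' v| ≤ C₀ * W₀ v) →
        (∀ v ∈ Set.Ioo (0 : ℝ) a, v ^ 2 * |W₀'' v| ≤ C₀ * W₀ v) →
        ∀ t u : ℝ, 0 < t → 0 < u → u ≤ μ * t → u + μ * t < a →
          |W₀ (u + μ * t) -
              W₀ (μ * t) *
                (1 + μ⁻¹ * (t * (μ * W₀' (μ * t)) / W₀ (μ * t)) *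
                  (V₀ (μ * t) * (u / (t * V₀ (μ * t)))))| ≤
            C' * W₀ (μ * t) * (V₀ (μ * t) * (u / (t * V₀ (μ * t)))) ^ 2 := by
  refine ⟨C₀ * Real.exp C₀ / μ ^ 2, by positivity, ?_⟩
  intro a ha V₀ V₀' V₀'' W₀ W₀' W₀'' hVpos hWpos hV1 hV2 hW1 hW2 hVc hWc hVb hWb hWb2
    t u ht hu hule hsum
  set x₀ := μ * t with hx₀def
  have hx₀ : 0 < x₀ := by positivity
  set x := u + x₀ with hxdef
  have hIsub : Set.Icc x₀ x ⊆ Set.Ioo 0 a := by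
    intro c hc
    exact ⟨lt_of_lt_of_le hx₀ hc.1, lt_of_le_of_lt hc.2 hsum⟩
  have hx₀mem : x₀ ∈ Set.Icc x₀ x := ⟨le_refl _, by simp [hxdef]; linarith⟩
  have hconv : Convex ℝ (Set.Icc x₀ x) := convex_Icc _ _
  -- Step 1: W₀ c ≤ exp C₀ * W₀ x₀ on the interval, via log derivative bound
  have hlog : ∀ c ∈ Set.Icc x₀ x,
      |Real.log (W₀ c) - Real.log (W₀ x₀)| ≤ (C₀ / x₀) * |c - x₀| := by
    intro c hc
    have := Convex.norm_image_sub_le_of_norm_hasDerivWithin_le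
      (f := fun v => Real.log (W₀ v)) (f' := fun v => W₀' v / W₀ v)
      (s := Set.Icc x₀ x) (C := C₀ / x₀)
      (fun v hv => (((hW1 v (hIsub hv)).log (ne_of_gt (hWpos v (hIsub hv)))).hasDerivWithinAt))
      (fun v hv => ?_) hconv hx₀mem hc
    · simpa [Real.norm_eq_abs] using this
    · have hvI := hIsub hv
      have hWv := hWpos v hvI
      have hb := hWb v hvI
      have hv0 : 0 < v := hvI.1
      rw [Real.norm_eq_abs, abs_div, abs_of_pos hWv, div_le_div_iff₀ hWv hx₀]
      have : x₀ * (v * |W₀' v|) ≤ x₀ * (C₀ * W₀ v) := by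
        exact mul_le_mul_of_nonneg_left hb (le_of_lt hx₀)
      nlinarith [abs_nonneg (W₀' v), hv.1]
  have hWle : ∀ c ∈ Set.Icc x₀ x, W₀ c ≤ Real.exp C₀ * W₀ x₀ := by
    intro c hc
    have h1 := hlog c hc
    have hca : |c - x₀| ≤ x₀ := by
      rw [abs_of_nonneg (by linarith [hc.1])]
      have := hc.2
      simp only [hxdef] at this
      linarith
    have h2 : Real.log (W₀ c) - Real.log (W₀ x₀) ≤ C₀ := by
      have := (abs_le.mp h1).2
      have h3 : (C₀ / x₀) * |c - x₀| ≤ C₀ := by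
        rw [div_mul_eq_mul_div, div_le_iff₀ hx₀]
        nlinarith
      linarith
    have hWc0 := hWpos c (hIsub hc)
    have hWx0 := hWpos x₀ (hIsub hx₀mem)
    calc W₀ c = Real.exp (Real.log (W₀ c)) := (Real.exp_log hWc0).symm
      _ ≤ Real.exp (C₀ + Real.log (W₀ x₀)) := Real.exp_le_exp.mpr (by linarith)
      _ = Real.exp C₀ * W₀ x₀ := by rw [Real.exp_add, Real.exp_log hWx0]
  -- Step 2: |W₀' c - W₀' x₀| ≤ M * (c - x₀) with M = C₀ exp C₀ W₀ x₀ / x₀²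
  set M := C₀ * Real.exp C₀ * W₀ x₀ / x₀ ^ 2 with hMdef
  have hW2bound : ∀ c ∈ Set.Icc x₀ x, |W₀'' c| ≤ M := by
    intro c hc
    have hcI := hIsub hc
    have hc0 : 0 < c := hcI.1
    have hb := hWb2 c hcI
    have hWc := hWle c hc
    have hWx0 := hWpos x₀ (hIsub hx₀mem)
    have hcx : x₀ ≤ c := hc.1
    have h1 : |W₀'' c| ≤ C₀ * W₀ c / c ^ 2 := by
      rw [le_div_iff₀ (by positivity)]
      nlinarith
    have h2 : C₀ * W₀ c / c ^ 2 ≤ C₀ * (Real.exp C₀ * W₀ x₀) / x₀ ^ 2 := by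
      apply div_le_div₀ (by positivity) (by nlinarith) (by positivity) (by nlinarith)
    rw [hMdef]
    calc |W₀'' c| ≤ C₀ * W₀ c / c ^ 2 := h1
      _ ≤ C₀ * (Real.exp C₀ * W₀ x₀) / x₀ ^ 2 := h2
      _ = C₀ * Real.exp C₀ * W₀ x₀ / x₀ ^ 2 := by ring
  have hW1bound : ∀ c ∈ Set.Icc x₀ x, |W₀' c - W₀' x₀| ≤ M * u := by
    intro c hc
    have := Convex.norm_image_sub_le_of_norm_hasDerivWithin_le
      (f := W₀') (f' := W₀'') (s := Set.Icc x₀ x) (C := M)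
      (fun v hv => (hW2 v (hIsub hv)).hasDerivWithinAt)
      (fun v hv => by simpa [Real.norm_eq_abs] using hW2bound v hv)
      hconv hx₀mem hc
    rw [Real.norm_eq_abs, Real.norm_eq_abs] at this
    have hM : 0 ≤ M := by
      have := hWpos x₀ (hIsub hx₀mem)
      rw [hMdef]; positivity
    have hca : |c - x₀| ≤ u := by
      rw [abs_of_nonneg (by linarith [hc.1])]
      have := hc.2; simp only [hxdef] at this; linarith
    calc |W₀' c - W₀' x₀| ≤ M * |c - x₀| := this
      _ ≤ M * u := by nlinarith
  -- Step 3: Taylor bound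
  have hxmem : x ∈ Set.Icc x₀ x := ⟨by linarith, le_refl _⟩
  have htaylor : |W₀ x - W₀ x₀ - W₀' x₀ * u| ≤ M * u * u := by
    have := Convex.norm_image_sub_le_of_norm_hasDerivWithin_le
      (f := fun v => W₀ v - W₀' x₀ * v) (f' := fun v => W₀' v - W₀' x₀)
      (s := Set.Icc x₀ x) (C := M * u)
      (fun v hv => by
        have h := ((hW1 v (hIsub hv)).sub
          ((hasDerivAt_id v).const_mul (W₀' x₀))).hasDerivWithinAt (s := Set.Icc x₀ x)
        simp only [mul_one] at h
        exact h)
      (fun v hv => by simpa [Real.norm_eq_abs] using hW1bound v hv)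
      hconv hx₀mem hxmem
    rw [Real.norm_eq_abs, Real.norm_eq_abs] at this
    have hxx : x - x₀ = u := by simp [hxdef]
    have heq : W₀ x - W₀' x₀ * x - (W₀ x₀ - W₀' x₀ * x₀) = W₀ x - W₀ x₀ - W₀' x₀ * u := by
      rw [hxdef]; ring
    rw [heq, hxx] at this
    rw [abs_of_nonneg hu.le] at this
    linarith [this]
  -- Finish: rewrite the goal
  have hVx0 : 0 < V₀ x₀ := hVpos x₀ (hIsub hx₀mem)
  have hWx0 : 0 < W₀ x₀ := hWpos x₀ (hIsub hx₀mem)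
  have hexpr : W₀ x₀ * (1 + μ⁻¹ * (t * (μ * W₀' x₀) / W₀ x₀) * (V₀ x₀ * (u / (t * V₀ x₀))))
      = W₀ x₀ + W₀' x₀ * u := by
    field_simp
  have hrhs : C₀ * Real.exp C₀ / μ ^ 2 * W₀ x₀ * (V₀ x₀ * (u / (t * V₀ x₀))) ^ 2
      = M * u * u := by
    rw [hMdef, hx₀def]
    field_simp
    ring
    rw [mul_assoc, mul_inv_cancel₀ (by rw [← hx₀def]; exact hVx0.ne'), mul_one]
  rw [hexpr, hrhs]
  calc |W₀ x - (W₀ x₀ + W₀' x₀ * u)| = |W₀ x - W₀ x₀ - W₀' x₀ * u| := by ring_nf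
    _ ≤ M * u * u := htaylor
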